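/- Let G be a graph in which every cycle is generated (as a mod-2 sum of edge sets) by a set K of cycles, each of length at most t. Let Π be a minimal edge cutset separating a vertex x from a vertex y (or from infinity). Then for every partition Π = Π₁ ∪ Π₂ into two nonempty parts, there exist endpoints x₁ of an edge in Π₁ and x₂ of an edge in Π₂ with dist(x₁, x₂) ≤ t/2. -/

import Mathlib

/-- Indicator vector (over `ℤ/2`) of a finite edge set. -/
def eInd {V : Type*} [DecidableEq V] (E : Finset (Sym2 V)) : Sym2 V → ZMod 2 :=
  fun e => if e ∈ E then 1 else 0

/-- `C` is the edge set of a cycle of `G`. -/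
def IsCycleEdgeSet {V : Type*} [DecidableEq V] (G : SimpleGraph V)
    (C : Finset (Sym2 V)) : Prop :=
  ∃ (v : V) (w : G.Walk v v), w.IsCycle ∧ w.edges.toFinset = C

/-- `C` is a mod-2 sum of finitely many members of `K`. -/
def GenBy {V : Type*} [DecidableEq V] (K : Set (Finset (Sym2 V)))
    (C : Finset (Sym2 V)) : Prop :=
  ∃ s : Finset (Finset (Sym2 V)), (s : Set (Finset (Sym2 V))) ⊆ K ∧
    ∀ e : Sym2 V, eInd C e = ∑ D ∈ s, eInd D e

namespace Stmt6Aux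

open SimpleGraph Finset

variable {V : Type*} [DecidableEq V] {G : SimpleGraph V}

lemma zmod2_add_self (a : ZMod 2) : a + a = 0 := by revert a; decide

/-- `f : Sym2 V → ZMod 2` is a sum of indicator vectors of members of `K`. -/
def Gen (K : Set (Finset (Sym2 V))) (f : Sym2 V → ZMod 2) : Prop :=
  ∃ s : Finset (Finset (Sym2 V)), (s : Set (Finset (Sym2 V))) ⊆ K ∧
    ∀ e : Sym2 V, f e = ∑ D ∈ s, eInd D e

lemma Gen_congr {K : Set (Finset (Sym2 V))} {f g : Sym2 V → ZMod 2}
    (h : ∀ e, f e = g e) (hf : Gen K f) : Gen K g := by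
  obtain ⟨s, hs, hsum⟩ := hf
  exact ⟨s, hs, fun e => (h e) ▸ hsum e⟩

lemma Gen_zero (K : Set (Finset (Sym2 V))) : Gen K (fun _ => 0) :=
  ⟨∅, by simp, by simp⟩

lemma Gen_add {K : Set (Finset (Sym2 V))} {f g : Sym2 V → ZMod 2}
    (hf : Gen K f) (hg : Gen K g) : Gen K (fun e => f e + g e) := by
  classical
  obtain ⟨s₁, hs₁, hsum₁⟩ := hf
  obtain ⟨s₂, hs₂, hsum₂⟩ := hg
  refine ⟨(s₁ \ s₂) ∪ (s₂ \ s₁), ?_, ?_⟩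
  · intro D hD
    simp only [coe_union, Set.mem_union, coe_sdiff, Set.mem_diff, mem_coe] at hD
    rcases hD with ⟨h, _⟩ | ⟨h, _⟩
    exacts [hs₁ h, hs₂ h]
  · intro e
    show f e + g e = _
    rw [hsum₁ e, hsum₂ e,
      Finset.sum_union disjoint_sdiff_sdiff]
    have e₁ : ∑ D ∈ s₁, eInd D e = ∑ D ∈ s₁ ∩ s₂, eInd D e + ∑ D ∈ s₁ \ s₂, eInd D e :=
      (Finset.sum_inter_add_sum_sdiff s₁ s₂ _).symm
    have e₂ : ∑ D ∈ s₂, eInd D e = ∑ D ∈ s₂ ∩ s₁, eInd D e + ∑ D ∈ s₂ \ s₁, eInd D e :=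
      (Finset.sum_inter_add_sum_sdiff s₂ s₁ _).symm
    rw [e₁, e₂, Finset.inter_comm s₂ s₁]
    linear_combination zmod2_add_self (∑ D ∈ s₁ ∩ s₂, eInd D e)

lemma Gen_sum {K : Set (Finset (Sym2 V))} (s : Finset (Finset (Sym2 V)))
    (h : ∀ D ∈ s, Gen K (eInd D)) : Gen K (fun e => ∑ D ∈ s, eInd D e) := by
  classical
  induction s using Finset.cons_induction with
  | empty => exact Gen_congr (by simp) (Gen_zero K)
  | cons a s ha ih =>
    have := Gen_add (h a (Finset.mem_cons_self a s))
      (ih (fun D hD => h D (Finset.mem_cons_of_mem hD)))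
    exact Gen_congr (fun e => by rw [Finset.sum_cons]) this

lemma Gen_trans {K K' : Set (Finset (Sym2 V))} (h : ∀ C ∈ K', Gen K (eInd C))
    {f : Sym2 V → ZMod 2} (hf : Gen K' f) : Gen K f := by
  obtain ⟨s, hs, hsum⟩ := hf
  exact Gen_congr (fun e => (hsum e).symm) (Gen_sum s (fun D hD => h D (hs hD)))

/-- Telescoping a potential function along a walk. -/
lemma walk_chi_sum (φ : V → ZMod 2) (χ : Sym2 V → ZMod 2)
    (hloc : ∀ a b : V, G.Adj a b → χ s(a, b) = φ a + φ b)
    {u v : V} (w : G.Walk u v) : (w.edges.map χ).sum = φ u + φ v := by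
  induction w with
  | nil => simpa using (zmod2_add_self _).symm
  | @cons a b c h p ih =>
    rw [Walk.edges_cons, List.map_cons, List.sum_cons, ih, hloc a b h]
    linear_combination zmod2_add_self (φ b)

lemma sum_count_eq (S : Finset (Sym2 V)) (l : List (Sym2 V)) :
    ∑ e ∈ S, (l.count e : ZMod 2) = (l.map (eInd S)).sum := by
  induction l with
  | nil => simp
  | cons a l ih =>
    have : ∀ e : Sym2 V, ((a :: l).count e : ZMod 2)
        = (l.count e : ZMod 2) + (if e = a then 1 else 0) := by
      intro e
      rw [List.count_cons]
      push_cast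
      congr 1
      by_cases h : e = a
      · simp [h]
      · simp [h, Ne.symm h]
    rw [Finset.sum_congr rfl (fun e _ => this e), Finset.sum_add_distrib, ih,
      Finset.sum_ite_eq' S a (fun _ => (1 : ZMod 2)), List.map_cons, List.sum_cons]
    simp only [eInd]
    ring

/-- The set of edge sets of cycles of `G`. -/
def CycSets (G : SimpleGraph V) [DecidableEq V] : Set (Finset (Sym2 V)) :=
  {C | IsCycleEdgeSet G C}

lemma path_loop_edge {a b : V} (hab : G.Adj a b) (q : G.Walk b a) (hq : q.IsPath)
    (hse : s(a, b) ∈ q.edges) : q.edges = [s(a, b)] := by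
  cases q with
  | nil => simp at hse
  | @cons b' z a' h₂ q₂ =>
    rw [Walk.cons_isPath_iff] at hq
    rw [Walk.edges_cons, List.mem_cons] at hse
    rcases hse with heq | hmem
    · rcases Sym2.eq_iff.mp heq with ⟨rfl, rfl⟩ | ⟨rfl, h2⟩
      · exact absurd rfl hab.ne
      · have : q₂ = Walk.nil := Walk.isPath_iff_eq_nil.mp hq.1
        subst this
        simp [Sym2.eq_swap]
    · exfalso
      have : s(b, a) ∈ q₂.edges := by rwa [Sym2.eq_swap] at hmem
      exact hq.2 (q₂.fst_mem_support_of_mem_edges this)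

lemma gen_walk_path {u v : V} (w : G.Walk u v) :
    ∃ p : G.Walk u v, p.IsPath ∧
      Gen (CycSets G) (fun e => ((w.edges.count e : ZMod 2) + (p.edges.count e : ZMod 2))) := by
  classical
  induction w with
  | nil =>
    exact ⟨Walk.nil, Walk.IsPath.nil, Gen_congr (by simp) (Gen_zero _)⟩
  | @cons a b c h p ih =>
    obtain ⟨p', hp', hg'⟩ := ih
    by_cases hu : a ∈ p'.support
    · -- drop the initial loop
      set q := p'.takeUntil a hu with hq
      set r := p'.dropUntil a hu with hr
      have hsplit : ∀ e, p'.edges.count e = q.edges.count e + r.edges.count e := by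
        intro e
        conv_lhs => rw [← p'.take_spec hu]
        rw [Walk.edges_append, List.count_append]
      have hqpath : q.IsPath := hp'.takeUntil hu
      have hrpath : r.IsPath := hp'.dropUntil hu
      refine ⟨r, hrpath, ?_⟩
      by_cases hse : s(a, b) ∈ q.edges
      · -- then q is the single edge; the loop contributes 0 mod 2
        have hqe : q.edges = [s(a, b)] := path_loop_edge h q hqpath hse
        refine Gen_congr (fun e => ?_) hg'
        show (_ : ZMod 2) + _ = _
        rw [hsplit e, hqe, Walk.edges_cons]
        simp only [List.count_cons, List.count_nil, beq_iff_eq]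
        push_cast
        ring
      · -- the loop is a genuine cycle
        have hcyc : (Walk.cons h q).IsCycle :=
          (Walk.cons_isCycle_iff q h).mpr ⟨hqpath, hse⟩
        have hnodup : (Walk.cons h q).edges.Nodup := hcyc.edges_nodup
        have hgenc : Gen (CycSets G) (fun e => (((Walk.cons h q).edges.count e : ZMod 2))) := by
          refine ⟨{(Walk.cons h q).edges.toFinset}, ?_, ?_⟩
          · intro D hD
            simp only [coe_singleton, Set.mem_singleton_iff] at hD
            subst hD
            exact ⟨a, Walk.cons h q, hcyc, rfl⟩
          · intro e
            rw [Finset.sum_singleton]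
            simp only [eInd, List.mem_toFinset]
            by_cases he : e ∈ (Walk.cons h q).edges
            · rw [if_pos he, List.count_eq_one_of_mem hnodup he]; rfl
            · rw [if_neg he, List.count_eq_zero_of_not_mem he]; rfl
        refine Gen_congr (fun e => ?_) (Gen_add hg' hgenc)
        show (_ : ZMod 2) + _ = _
        rw [hsplit e, Walk.edges_cons, Walk.edges_cons]
        simp only [List.count_cons, beq_iff_eq]
        push_cast
        linear_combination zmod2_add_self ((List.count e q.edges : ZMod 2))
    · refine ⟨Walk.cons h p', (Walk.cons_isPath_iff h p').mpr ⟨hp', hu⟩, ?_⟩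
      refine Gen_congr (fun e => ?_) hg'
      show (_ : ZMod 2) + _ = _
      rw [Walk.edges_cons, Walk.edges_cons]
      simp only [List.count_cons, beq_iff_eq]
      push_cast
      linear_combination -zmod2_add_self (if s(a, b) = e then (1 : ZMod 2) else 0)

lemma gen_closed {v : V} (w : G.Walk v v) :
    Gen (CycSets G) (fun e => (w.edges.count e : ZMod 2)) := by
  obtain ⟨p, hp, hgenp⟩ := gen_walk_path w
  have : p = Walk.nil := Walk.isPath_iff_eq_nil.mp hp
  subst this
  exact Gen_congr (fun e => by simp) hgenp

/-- Two vertices on a closed walk of length `L` are at distance at most `L/2`. -/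
lemma two_mul_dist_le {v : V} (c : G.Walk v v) {u₁ u₂ : V}
    (h₁ : u₁ ∈ c.support) (h₂ : u₂ ∈ c.support) : 2 * G.dist u₁ u₂ ≤ c.length := by
  have hspec := c.take_spec h₁
  have hlen : (c.takeUntil u₁ h₁).length + (c.dropUntil u₁ h₁).length = c.length := by
    conv_rhs => rw [← hspec]
    rw [Walk.length_append]
  have h₂' : u₂ ∈ (c.takeUntil u₁ h₁).support ∨ u₂ ∈ (c.dropUntil u₁ h₁).support := by
    rw [← Walk.mem_support_append_iff, hspec]; exact h₂
  rcases h₂' with hmem | hmem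
  · set t₁ := c.takeUntil u₁ h₁ with ht₁
    have hs : (t₁.takeUntil u₂ hmem).length + (t₁.dropUntil u₂ hmem).length = t₁.length := by
      conv_rhs => rw [← t₁.take_spec hmem]
      rw [Walk.length_append]
    have d1 : G.dist u₁ u₂ ≤ (t₁.dropUntil u₂ hmem).reverse.length := dist_le _
    have d2 : G.dist u₁ u₂ ≤ ((c.dropUntil u₁ h₁).append (t₁.takeUntil u₂ hmem)).length :=
      dist_le _
    rw [Walk.length_reverse] at d1
    rw [Walk.length_append] at d2
    omega
  · set d₁ := c.dropUntil u₁ h₁ with hd₁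
    have hs : (d₁.takeUntil u₂ hmem).length + (d₁.dropUntil u₂ hmem).length = d₁.length := by
      conv_rhs => rw [← d₁.take_spec hmem]
      rw [Walk.length_append]
    have d1 : G.dist u₁ u₂ ≤ (d₁.takeUntil u₂ hmem).length := dist_le _
    have d2 : G.dist u₂ u₁ ≤ ((d₁.dropUntil u₂ hmem).append (c.takeUntil u₁ h₁)).length :=
      dist_le _
    rw [Walk.length_append] at d2
    rw [SimpleGraph.dist_comm] at d2
    omega

lemma sym2_exists (e : Sym2 V) : ∃ a b : V, e = s(a, b) :=
  Sym2.ind (fun a b => ⟨a, b, rfl⟩) e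

end Stmt6Aux

open Stmt6Aux SimpleGraph Finset in
/-- if every cycle of `G` is a mod-2 sum of cycles from `K`, each of length
at most `t`, and `Π` is a minimal edge cutset separating `x` from `y`, then any partition
of `Π` into two nonempty parts contains edges with endpoints at distance at most `t/2`. -/
theorem stmt6 {V : Type*} [DecidableEq V] (G : SimpleGraph V) (hc : G.Connected)
    (t : ℕ) (K : Set (Finset (Sym2 V)))
    (hK : ∀ C ∈ K, IsCycleEdgeSet G C ∧ C.card ≤ t)
    (hgen : ∀ C : Finset (Sym2 V), IsCycleEdgeSet G C → GenBy K C)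
    (x y : V) (P : Finset (Sym2 V)) (hPe : (P : Set (Sym2 V)) ⊆ G.edgeSet)
    (hsep : ∀ p : G.Walk x y, ∃ e ∈ p.edges, e ∈ P)
    (hmin : ∀ Q : Finset (Sym2 V), Q ⊂ P → ∃ p : G.Walk x y, ∀ e ∈ p.edges, e ∉ Q)
    (P₁ P₂ : Finset (Sym2 V)) (hpart : P₁ ∪ P₂ = P) (hdisj : Disjoint P₁ P₂)
    (h₁ : P₁.Nonempty) (h₂ : P₂.Nonempty) :
    ∃ e₁ ∈ P₁, ∃ e₂ ∈ P₂, ∃ x₁ ∈ e₁, ∃ x₂ ∈ e₂, 2 * G.dist x₁ x₂ ≤ t := by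
  classical
  -- the side of the cut containing x
  set Xs : Set V := {v | ∃ w : G.Walk x v, ∀ e ∈ w.edges, e ∉ P} with hXsdef
  have hxX : x ∈ Xs := ⟨Walk.nil, by simp⟩
  have hyX : y ∉ Xs := by
    rintro ⟨w, hw⟩
    obtain ⟨e, he, heP⟩ := hsep w
    exact hw e he heP
  have hstep : ∀ a b : V, G.Adj a b → s(a, b) ∉ P → a ∈ Xs → b ∈ Xs := by
    rintro a b hab hnP ⟨w, hw⟩
    refine ⟨w.concat hab, ?_⟩
    intro e he
    rw [Walk.edges_concat, List.concat_eq_append, List.mem_append] at he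
    rcases he with he | he
    · exact hw e he
    · rw [List.mem_singleton] at he
      subst he; exact hnP
  have claim1 : ∀ (a b : V) {c d : V} (p : G.Walk c d), c ∈ Xs →
      (∀ f ∈ p.edges, f ∉ P.erase s(a, b)) → s(a, b) ∈ p.edges → a ∈ Xs ∨ b ∈ Xs := by
    intro a b c d p
    induction p with
    | nil => intro _ _ hmem; simp at hmem
    | @cons c z d hadj p ih =>
      intro hcX hav hmem
      by_cases heq : s(a, b) = s(c, z)
      · rcases Sym2.eq_iff.mp heq with ⟨rfl, rfl⟩ | ⟨rfl, rfl⟩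
        · exact Or.inl hcX
        · exact Or.inr hcX
      · have hmem' : s(a, b) ∈ p.edges := by
          rw [Walk.edges_cons, List.mem_cons] at hmem
          exact hmem.resolve_left heq
        have hcz : s(c, z) ∉ P := by
          intro hP
          exact hav s(c, z) (by simp)
            (Finset.mem_erase.mpr ⟨fun hh => heq hh.symm, hP⟩)
        exact ih (hstep c z hadj hcz hcX)
          (fun f hf => hav f (by rw [Walk.edges_cons]; exact List.mem_cons_of_mem _ hf)) hmem'
  have claim2 : ∀ (a b : V), a ∈ Xs → b ∈ Xs → ∀ {c d : V} (p : G.Walk c d), c ∈ Xs →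
      (∀ f ∈ p.edges, f ∉ P.erase s(a, b)) → d ∈ Xs := by
    intro a b haX hbX c d p
    induction p with
    | nil => exact fun h _ => h
    | @cons c z d hadj p ih =>
      intro hcX hav
      refine ih ?_ (fun f hf => hav f (by rw [Walk.edges_cons]; exact List.mem_cons_of_mem _ hf))
      by_cases heq : s(c, z) = s(a, b)
      · rcases Sym2.eq_iff.mp heq with ⟨rfl, rfl⟩ | ⟨rfl, rfl⟩
        exacts [hbX, haX]
      · have : s(c, z) ∉ P := fun hP => hav s(c, z) (by simp) (Finset.mem_erase.mpr ⟨heq, hP⟩)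
        exact hstep c z hadj this hcX
  -- the potential function
  set φ : V → ZMod 2 := fun v => if v ∈ Xs then 1 else 0 with hφ
  have hloc : ∀ a b : V, G.Adj a b → eInd P s(a, b) = φ a + φ b := by
    intro a b hab
    by_cases hP : s(a, b) ∈ P
    · have hsub : P.erase s(a, b) ⊂ P := Finset.erase_ssubset hP
      obtain ⟨p, hp⟩ := hmin _ hsub
      have hmem : s(a, b) ∈ p.edges := by
        obtain ⟨f, hf, hfP⟩ := hsep p
        have hne := hp f hf
        have hfe : f = s(a, b) := by
          by_contra hcon
          exact hne (Finset.mem_erase.mpr ⟨hcon, hfP⟩)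
        rwa [hfe] at hf
      have hor := claim1 a b p hxX hp hmem
      have hnand : ¬(a ∈ Xs ∧ b ∈ Xs) := by
        rintro ⟨haX, hbX⟩
        exact hyX (claim2 a b haX hbX p hxX hp)
      simp only [eInd, if_pos hP, hφ]
      rcases hor with h | h
      · have hb : b ∉ Xs := fun hbb => hnand ⟨h, hbb⟩
        rw [if_pos h, if_neg hb]; ring
      · have ha : a ∉ Xs := fun haa => hnand ⟨haa, h⟩
        rw [if_neg ha, if_pos h]; ring
    · have hiff : a ∈ Xs ↔ b ∈ Xs :=
        ⟨hstep a b hab hP, hstep b a hab.symm (by rwa [Sym2.eq_swap])⟩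
      simp only [eInd, if_neg hP, hφ]
      by_cases haX : a ∈ Xs
      · rw [if_pos haX, if_pos (hiff.mp haX)]; decide
      · rw [if_neg haX, if_neg (fun h => haX (hiff.mpr h))]; decide
  -- the two paths
  have hP₁P : P₁ ⊆ P := hpart ▸ Finset.subset_union_left
  have hP₂P : P₂ ⊆ P := hpart ▸ Finset.subset_union_right
  have hP₁sub : P₁ ⊂ P := by
    refine ⟨hP₁P, fun hPP₁ => ?_⟩
    obtain ⟨e, he⟩ := h₂
    exact Finset.disjoint_left.mp hdisj (hPP₁ (hP₂P he)) he
  have hP₂sub : P₂ ⊂ P := by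
    refine ⟨hP₂P, fun hPP₂ => ?_⟩
    obtain ⟨e, he⟩ := h₁
    exact Finset.disjoint_left.mp hdisj he (hPP₂ (hP₁P he))
  obtain ⟨p₁, hp₁⟩ := hmin P₂ hP₂sub
  obtain ⟨p₂, hp₂⟩ := hmin P₁ hP₁sub
  set W : G.Walk x x := p₁.append p₂.reverse with hW
  -- generate the parity vector of W from K
  have hKgen : ∀ C ∈ CycSets G, Gen K (eInd C) := fun C hC => hgen C hC
  obtain ⟨s, hsK, hsum⟩ : Gen K (fun e => (W.edges.count e : ZMod 2)) :=
    Gen_trans hKgen (gen_closed W)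
  have hWcount : ∀ e : Sym2 V, W.edges.count e = p₁.edges.count e + p₂.edges.count e := by
    intro e
    rw [hW, Walk.edges_append, List.count_append, Walk.edges_reverse, List.count_reverse]
  -- sum over P₁ of the parity vector of W is 1
  have hsum1 : ∑ e ∈ P₁, (p₁.edges.count e : ZMod 2) = 1 := by
    rw [sum_count_eq]
    have hcongr : p₁.edges.map (eInd P₁) = p₁.edges.map (eInd P) := by
      apply List.map_congr_left
      intro e he
      have hnot₂ : e ∉ P₂ := hp₁ e he
      simp only [eInd]
      by_cases heP : e ∈ P
      · rw [if_pos heP, if_pos (by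
          rw [← hpart] at heP
          exact (Finset.mem_union.mp heP).resolve_right hnot₂)]
      · rw [if_neg heP, if_neg (fun hh => heP (hP₁P hh))]
    rw [hcongr, walk_chi_sum φ (eInd P) hloc p₁]
    rw [hφ]
    simp only [if_pos hxX, if_neg hyX]
    ring
  have hsum2 : ∑ e ∈ P₁, (p₂.edges.count e : ZMod 2) = 0 := by
    apply Finset.sum_eq_zero
    intro e he
    rw [List.count_eq_zero_of_not_mem (fun hh => hp₂ e hh he)]
    rfl
  have hA : ∑ D ∈ s, ∑ e ∈ P₁, eInd D e = 1 := by
    rw [← Finset.sum_comm]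
    have : ∀ e ∈ P₁, ∑ D ∈ s, eInd D e = (p₁.edges.count e : ZMod 2)
        + (p₂.edges.count e : ZMod 2) := by
      intro e _
      rw [← hsum e]
      show (List.count e W.edges : ZMod 2) = _
      rw [hWcount e]
      push_cast
      ring
    rw [Finset.sum_congr rfl this, Finset.sum_add_distrib, hsum1, hsum2]
    ring
  -- find a generator meeting P₁
  have hD : ∃ D ∈ s, ∑ e ∈ P₁, eInd D e ≠ 0 := by
    by_contra hcon
    push_neg at hcon
    rw [Finset.sum_eq_zero hcon] at hA
    exact one_ne_zero hA.symm
  obtain ⟨D, hDs, hD₁⟩ := hD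
  have hDK : D ∈ K := hsK hDs
  obtain ⟨⟨v, cyc, hcyc, hDedges⟩, hcard⟩ := hK D hDK
  -- the generator also meets P₂
  have hcut : ∑ e ∈ P₁, eInd D e + ∑ e ∈ P₂, eInd D e = 0 := by
    rw [← Finset.sum_union hdisj, hpart]
    have h1 : ∑ e ∈ P, eInd D e = ∑ e ∈ P ∩ D, (1 : ZMod 2) := by
      rw [← Finset.sum_ite_mem P D (fun _ => (1 : ZMod 2))]
      rfl
    have h2 : ∑ e ∈ D, eInd P e = ∑ e ∈ D ∩ P, (1 : ZMod 2) := by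
      rw [← Finset.sum_ite_mem D P (fun _ => (1 : ZMod 2))]
      rfl
    rw [h1, ← Finset.inter_comm D P, ← h2, ← hDedges,
      List.sum_toFinset _ hcyc.edges_nodup, walk_chi_sum φ (eInd P) hloc cyc]
    exact zmod2_add_self _
  have hD₂ : ∑ e ∈ P₂, eInd D e ≠ 0 := by
    intro hzero
    rw [hzero, add_zero] at hcut
    exact hD₁ hcut
  -- extract the two edges
  have he₁ : ∃ e₁ ∈ P₁, e₁ ∈ D := by
    by_contra hcon
    push_neg at hcon
    exact hD₁ (Finset.sum_eq_zero (fun e he => by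
      simp only [eInd, if_neg (hcon e he)]))
  have he₂ : ∃ e₂ ∈ P₂, e₂ ∈ D := by
    by_contra hcon
    push_neg at hcon
    exact hD₂ (Finset.sum_eq_zero (fun e he => by
      simp only [eInd, if_neg (hcon e he)]))
  obtain ⟨e₁, he₁P, he₁D⟩ := he₁
  obtain ⟨e₂, he₂P, he₂D⟩ := he₂
  obtain ⟨a₁, b₁, rfl⟩ := sym2_exists e₁
  obtain ⟨a₂, b₂, rfl⟩ := sym2_exists e₂
  have he₁c : s(a₁, b₁) ∈ cyc.edges := by
    rw [← hDedges] at he₁D; exact List.mem_toFinset.mp he₁D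
  have he₂c : s(a₂, b₂) ∈ cyc.edges := by
    rw [← hDedges] at he₂D; exact List.mem_toFinset.mp he₂D
  have ha₁ : a₁ ∈ cyc.support := cyc.fst_mem_support_of_mem_edges he₁c
  have ha₂ : a₂ ∈ cyc.support := cyc.fst_mem_support_of_mem_edges he₂c
  have hlen : cyc.length ≤ t := by
    have : D.card = cyc.length := by
      rw [← hDedges, List.toFinset_card_of_nodup hcyc.edges_nodup, Walk.length_edges]
    omega
  refine ⟨s(a₁, b₁), he₁P, s(a₂, b₂), he₂P, a₁, Sym2.mem_mk_left a₁ b₁,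
    a₂, Sym2.mem_mk_left a₂ b₂, ?_⟩
  calc 2 * G.dist a₁ a₂ ≤ cyc.length := two_mul_dist_le cyc ha₁ ha₂
    _ ≤ t := hlen
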